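/- arXiv:2506.05632 — 2 statements merged into one kernel-verified Lean document; each statement's English description precedes it below -/
import Mathlib

section
/- Conditional GLS samples the target correctly: let A be a random variable taking values in a countable set, independent of the family {S_i^(k)}, and for each value a let q(·|a) be a probability mass function on {1,…,N} with q_j(a) > 0 for all j. Define Y = argmin_{1≤i≤N} min_{1≤k≤K} S_i^(k)/q_i(A). Then for every a with Pr[A = a] > 0 and every j ∈ {1,…,N}, Pr[Y = j | A = a] = q_j(a). -/
open MeasureTheory ProbabilityTheory Real Set Filter
open scoped ENNReal NNReal

lemma expMeasure_apply (r : ℝ) {s : Set ℝ} (hs : MeasurableSet s) :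
    expMeasure r s = ∫⁻ x in s, exponentialPDF r x := withDensity_apply _ hs

lemma expMeasure_Iic {r : ℝ} (hr : 0 < r) (x : ℝ) :
    expMeasure r (Iic x) = ENNReal.ofReal (if 0 ≤ x then 1 - rexp (-(r * x)) else 0) := by
  rw [expMeasure_apply r measurableSet_Iic]
  exact lintegral_exponentialPDF_eq_antiDeriv hr x

lemma expMeasure_Ioi {r : ℝ} (hr : 0 < r) (t : ℝ) :
    expMeasure r (Ioi t) = ENNReal.ofReal (rexp (-(r * max t 0))) := by
  haveI := isProbabilityMeasure_expMeasure hr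
  have h1 : Ioi t = (Iic t)ᶜ := by simp
  rw [h1, measure_compl measurableSet_Iic (measure_ne_top _ _), measure_univ, expMeasure_Iic hr]
  rcases le_or_gt 0 t with h | h
  · have hle : rexp (-(r * t)) ≤ 1 := exp_le_one_iff.2 (by nlinarith)
    rw [if_pos h, max_eq_left h, ← ENNReal.ofReal_one, ← ENNReal.ofReal_sub _ (by linarith)]
    congr 1; ring
  · rw [if_neg (not_le.2 h), max_eq_right h.le]
    simp

lemma expMeasure_singleton {r : ℝ} (t : ℝ) : expMeasure r {t} = 0 :=
  (withDensity_absolutelyContinuous volume _) (by simp)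

lemma expMeasure_Ici {r : ℝ} (hr : 0 < r) (t : ℝ) :
    expMeasure r (Ici t) = ENNReal.ofReal (rexp (-(r * max t 0))) := by
  rw [← expMeasure_Ioi hr t]
  refine le_antisymm ?_ (measure_mono Ioi_subset_Ici_self)
  calc expMeasure r (Ici t) ≤ expMeasure r ({t} ∪ Ioi t) := measure_mono (by
        intro x hx; rcases eq_or_lt_of_le (mem_Ici.1 hx) with h | h
        · exact Or.inl h.symm
        · exact Or.inr h)
    _ ≤ expMeasure r {t} + expMeasure r (Ioi t) := measure_union_le _ _
    _ = expMeasure r (Ioi t) := by rw [expMeasure_singleton, zero_add]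

/-- Characterization of exponential measure by its survival function. -/
lemma eq_expMeasure {ν : Measure ℝ} [IsProbabilityMeasure ν] {r : ℝ} (hr : 0 < r)
    (h : ∀ t, ν (Ici t) = ENNReal.ofReal (rexp (-(r * max t 0)))) : ν = expMeasure r :=
  Measure.ext_of_Ici ν _ (fun t => (h t).trans (expMeasure_Ici hr t).symm)

section iInfFin
variable {ι : Type*} [Finite ι] [Nonempty ι] (f : ι → ℝ) (a : ℝ)

lemma le_iInf_iff_fin : a ≤ (⨅ i, f i) ↔ ∀ i, a ≤ f i :=
  ⟨fun h i => h.trans (ciInf_le (Set.Finite.bddBelow (Set.finite_range f)) i),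
   fun h => le_ciInf h⟩

lemma lt_iInf_iff_fin : a < (⨅ i, f i) ↔ ∀ i, a < f i := by
  constructor
  · exact fun h i => h.trans_le (ciInf_le (Set.Finite.bddBelow (Set.finite_range f)) i)
  · intro h
    obtain ⟨i, hi⟩ := Finite.exists_min f
    have : (⨅ i, f i) = f i := le_antisymm (ciInf_le (Set.Finite.bddBelow (Set.finite_range f)) i) (le_ciInf hi)
    rw [this]; exact h i

end iInfFin

/-- Law of the min of `K` iid `Exp(1)` is `Exp(K)`. -/
lemma map_iInf_expOne (K : ℕ) (hK : 0 < K) :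
    (Measure.pi fun _ : Fin K => expMeasure 1).map (fun y => ⨅ k, y k) = expMeasure K := by
  haveI : Nonempty (Fin K) := ⟨⟨0, hK⟩⟩
  haveI := isProbabilityMeasure_expMeasure one_pos
  have hmeas : Measurable fun y : Fin K → ℝ => ⨅ k, y k :=
    Measurable.iInf (fun k => measurable_pi_apply k)
  haveI : IsProbabilityMeasure ((Measure.pi fun _ : Fin K => expMeasure 1).map
      (fun y => ⨅ k, y k)) := Measure.isProbabilityMeasure_map hmeas.aemeasurable
  refine eq_expMeasure (by positivity) (fun t => ?_)
  rw [Measure.map_apply hmeas measurableSet_Ici]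
  have hset : (fun y : Fin K → ℝ => ⨅ k, y k) ⁻¹' Ici t = Set.pi univ (fun _ => Ici t) := by
    ext y
    simp only [mem_preimage, mem_Ici, Set.mem_pi, mem_univ, forall_true_left]
    exact (le_iInf_iff_fin y t).trans (by simp)
  rw [hset, Measure.pi_pi]
  simp only [expMeasure_Ici one_pos, one_mul, Finset.prod_const, Finset.card_univ, Fintype.card_fin]
  rw [← ENNReal.ofReal_pow (exp_nonneg _), ← Real.exp_nat_mul]
  ring_nf

/-- Law of `Exp(r)` scaled by `1/c` is `Exp(r*c)`. -/
lemma map_div_expMeasure {r c : ℝ} (hr : 0 < r) (hc : 0 < c) :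
    (expMeasure r).map (fun x => x / c) = expMeasure (r * c) := by
  haveI := isProbabilityMeasure_expMeasure hr
  have hmeas : Measurable fun x : ℝ => x / c := measurable_id.div_const c
  haveI : IsProbabilityMeasure ((expMeasure r).map (fun x => x / c)) :=
    Measure.isProbabilityMeasure_map hmeas.aemeasurable
  refine eq_expMeasure (by positivity) (fun t => ?_)
  rw [Measure.map_apply hmeas measurableSet_Ici]
  have hset : (fun x : ℝ => x / c) ⁻¹' Ici t = Ici (c * t) := by
    ext x
    simp only [mem_preimage, mem_Ici]
    rw [le_div_iff₀ hc, mul_comm]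
  rw [hset, expMeasure_Ici hr]
  congr 2
  rcases le_or_gt 0 t with h | h
  · rw [max_eq_left (by positivity), max_eq_left h]; ring
  · rw [max_eq_right (by nlinarith), max_eq_right h.le]; ring

/-- `y ↦ (min y)/c` pushes `(Exp 1)^K` to `Exp(K*c)`. -/
lemma measurePreserving_min_div (K : ℕ) (hK : 0 < K) {c : ℝ} (hc : 0 < c) :
    MeasurePreserving (fun y : Fin K → ℝ => (⨅ k, y k) / c)
      (Measure.pi fun _ : Fin K => expMeasure 1) (expMeasure (K * c)) := by
  haveI : Nonempty (Fin K) := ⟨⟨0, hK⟩⟩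
  have hmeas : Measurable fun y : Fin K → ℝ => ⨅ k, y k :=
    Measurable.iInf (fun k => measurable_pi_apply k)
  refine ⟨hmeas.div_const c, ?_⟩
  have : (fun y : Fin K → ℝ => (⨅ k, y k) / c) = (fun x => x / c) ∘ (fun y => ⨅ k, y k) := rfl
  rw [this, ← Measure.map_map (measurable_id'.div_const c) hmeas, map_iInf_expOne K hK,
    map_div_expMeasure (by positivity) hc]


lemma integral_exp_neg_mul_Ioi {L : ℝ} (hL : 0 < L) :
    ∫ t in Ioi (0:ℝ), rexp (-(L * t)) = 1 / L := by
  have hderiv : ∀ x ∈ Ici (0:ℝ), HasDerivAt (fun a => -rexp (-(L * a)) / L) (rexp (-(L * x))) x := by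
    intro x _
    have h := (hasDerivAt_neg_exp_mul_exp (r := L) (x := x)).div_const L
    simpa [mul_div_assoc, mul_div_cancel_left₀ _ hL.ne'] using h
  have htendsto : Tendsto (fun a => -rexp (-(L * a)) / L) atTop (nhds 0) := by
    have h1 : Tendsto (fun a : ℝ => L * a) atTop atTop := tendsto_id.const_mul_atTop hL
    have h2 : Tendsto (fun a : ℝ => rexp (-(L * a))) atTop (nhds 0) :=
      (tendsto_exp_neg_atTop_nhds_zero).comp h1
    simpa using (h2.neg.div_const L)
  have hint : IntegrableOn (fun x => rexp (-(L * x))) (Ioi 0) := by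
    simpa [neg_mul] using exp_neg_integrableOn_Ioi 0 hL
  have := integral_Ioi_of_hasDerivAt_of_tendsto' hderiv hint htendsto
  rw [this]; simp [neg_div]

lemma lintegral_exp_tail {lam b : ℝ} (hlam : 0 < lam) (hb : 0 ≤ b) :
    ∫⁻ t, ENNReal.ofReal (rexp (-(b * max t 0))) ∂(expMeasure lam)
      = ENNReal.ofReal (lam / (lam + b)) := by
  have hg : Measurable fun t : ℝ => ENNReal.ofReal (rexp (-(b * max t 0))) := by
    apply ENNReal.measurable_ofReal.comp
    exact (continuous_exp.comp ((continuous_const.mul (continuous_id.max continuous_const)).neg)).measurable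
  have hpdf : Measurable (exponentialPDF lam) := (measurable_exponentialPDFReal lam).ennreal_ofReal
  rw [show expMeasure lam = volume.withDensity (exponentialPDF lam) from rfl,
    lintegral_withDensity_eq_lintegral_mul volume hpdf hg]
  simp only [Pi.mul_apply]
  rw [← lintegral_add_compl (fun t => (exponentialPDF lam t) * ENNReal.ofReal (rexp (-(b * max t 0)))) measurableSet_Ici (μ := volume)]
  have h2 : ∫⁻ t in (Ici (0:ℝ))ᶜ, (exponentialPDF lam t) * ENNReal.ofReal (rexp (-(b * max t 0))) = 0 := by
    rw [compl_Ici]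
    rw [setLIntegral_congr_fun_ae measurableSet_Iio (ae_of_all _ (fun (t : ℝ) (ht : t < 0) => by
      rw [exponentialPDF_of_neg ht, zero_mul]))]
    simp
  have h1 : ∫⁻ t in Ici (0:ℝ), (exponentialPDF lam t) * ENNReal.ofReal (rexp (-(b * max t 0)))
      = ENNReal.ofReal (lam / (lam + b)) := by
    have hL : 0 < lam + b := by linarith
    rw [setLIntegral_congr_fun_ae measurableSet_Ici (ae_of_all _ (fun t (ht : (0:ℝ) ≤ t) =>
      show exponentialPDF lam t * ENNReal.ofReal (rexp (-(b * max t 0)))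
          = ENNReal.ofReal (lam * rexp (-((lam + b) * t))) from by
        rw [exponentialPDF_of_nonneg ht, max_eq_left ht, ← ENNReal.ofReal_mul (by positivity)]
        congr 1
        rw [mul_assoc, ← Real.exp_add]
        ring_nf))]
    rw [setLIntegral_congr (Ioi_ae_eq_Ici (a := (0:ℝ))).symm]
    have hint : IntegrableOn (fun x => lam * rexp (-((lam + b) * x))) (Ioi (0:ℝ)) := by
      exact ((exp_neg_integrableOn_Ioi 0 hL).const_mul lam).congr (ae_of_all _ (fun x => by simp only []; congr 1; ring))
    rw [← ofReal_integral_eq_lintegral_ofReal hint (ae_of_all _ (fun t => by positivity))]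
    congr 1
    rw [MeasureTheory.integral_const_mul, integral_exp_neg_mul_Ioi hL]
    field_simp
  rw [h1, h2, add_zero]


set_option maxHeartbeats 2000000 in
lemma pi_argmin (N K : ℕ) (hN : 0 < N) (hK : 0 < K) (j : Fin N) (c : Fin N → ℝ)
    (hc : ∀ i, 0 < c i) (hsum : ∑ i, c i = 1) :
    (Measure.pi fun _ : Fin N × Fin K => expMeasure 1)
      {x | ∀ i, i ≠ j → (⨅ k, x (j, k)) / c j < (⨅ k, x (i, k)) / c i}
      = ENNReal.ofReal (c j) := by
  haveI := isProbabilityMeasure_expMeasure one_pos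
  haveI : Nonempty (Fin K) := ⟨⟨0, hK⟩⟩
  classical
  set p : Fin N × Fin K → Prop := fun ik => ik.1 = j with hp
  let e2 : Fin K ≃ {ik : Fin N × Fin K // p ik} :=
    { toFun := fun k => ⟨(j, k), rfl⟩
      invFun := fun s => s.1.2
      left_inv := fun k => rfl
      right_inv := fun s => Subtype.ext (Prod.ext s.2.symm rfl) }
  set T : ({ik : Fin N × Fin K // p ik} → ℝ) → ℝ :=
    fun u => (⨅ k : Fin K, u (e2 k)) / c j with hT
  have hTmeas : Measurable T := by
    rw [hT]
    exact Measurable.div_const (Measurable.iInf (fun k : Fin K => measurable_pi_apply (e2 k))) (c j)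
  set B' : Set (({ik : Fin N × Fin K // p ik} → ℝ) × ({ik : Fin N × Fin K // ¬ p ik} → ℝ)) :=
    {uv | ∀ s : {ik : Fin N × Fin K // ¬ p ik}, c s.1.1 * T uv.1 < uv.2 s} with hB'
  have hB'meas : MeasurableSet B' := by
    have hrw : B' = ⋂ s : {ik : Fin N × Fin K // ¬ p ik},
        {uv : ({ik : Fin N × Fin K // p ik} → ℝ) × ({ik : Fin N × Fin K // ¬ p ik} → ℝ) |
          c s.1.1 * T uv.1 < uv.2 s} := by
      ext uv; simp [hB', Set.mem_iInter]
    rw [hrw]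
    exact MeasurableSet.iInter fun s => measurableSet_lt
      (measurable_const.mul (hTmeas.comp measurable_fst))
      ((measurable_pi_apply s).comp measurable_snd)
  set e := MeasurableEquiv.piEquivPiSubtypeProd (fun _ : Fin N × Fin K => ℝ) p with he
  have hEB : {x : Fin N × Fin K → ℝ | ∀ i, i ≠ j → (⨅ k, x (j, k)) / c j < (⨅ k, x (i, k)) / c i}
      = e ⁻¹' B' := by
    ext x
    have hex : e x = (fun s : {ik : Fin N × Fin K // p ik} => x s.1,
        fun s : {ik : Fin N × Fin K // ¬ p ik} => x s.1) := rfl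
    simp only [mem_setOf_eq, mem_preimage, hex, hB']
    have hTx : T (fun s : {ik : Fin N × Fin K // p ik} => x s.1) = (⨅ k, x (j, k)) / c j := rfl
    rw [hTx]
    constructor
    · rintro h ⟨⟨i, k⟩, hi⟩
      have h1 := h i hi
      rw [lt_div_iff₀ (hc i), mul_comm] at h1
      exact (lt_iInf_iff_fin (fun k => x (i, k)) _).1 h1 k
    · intro h i hi
      rw [lt_div_iff₀ (hc i), mul_comm, lt_iInf_iff_fin]
      exact fun k => h ⟨(i, k), hi⟩
  rw [hEB]
  have hmp := measurePreserving_piEquivPiSubtypeProd (fun _ : Fin N × Fin K => expMeasure 1) p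
  rw [hmp.measure_preimage hB'meas.nullMeasurableSet, Measure.prod_apply hB'meas]
  set b : ℝ := (∑ s : {ik : Fin N × Fin K // ¬ p ik}, c s.1.1) with hb
  have hbnn : 0 ≤ b := Finset.sum_nonneg fun s _ => (hc _).le
  set g : ℝ → ℝ≥0∞ := fun t => ENNReal.ofReal (rexp (-(b * max t 0))) with hg
  have hgmeas : Measurable g := ENNReal.measurable_ofReal.comp
    (continuous_exp.comp ((continuous_const.mul (continuous_id.max continuous_const)).neg)).measurable
  have hginner : ∀ u, (Measure.pi fun _ : {ik : Fin N × Fin K // ¬ p ik} => expMeasure 1)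
      (Prod.mk u ⁻¹' B') = g (T u) := by
    intro u
    have hset : Prod.mk u ⁻¹' B' = Set.pi univ (fun s => Ioi (c s.1.1 * T u)) := by
      ext v; simp [hB', Set.mem_pi]
    rw [hset, Measure.pi_pi]
    have htail : ∀ s : {ik : Fin N × Fin K // ¬ p ik},
        expMeasure 1 (Ioi (c s.1.1 * T u)) = ENNReal.ofReal (rexp (-(c s.1.1 * max (T u) 0))) :=
      fun s => by rw [expMeasure_Ioi one_pos, one_mul, mul_max_of_nonneg _ _ (hc _).le, mul_zero]
    simp_rw [htail]
    rw [← ENNReal.ofReal_prod_of_nonneg (fun s _ => exp_nonneg _), ← Real.exp_sum, hg]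
    congr 2
    simp only [← neg_mul]
    rw [← Finset.sum_mul, Finset.sum_neg_distrib, ← hb, neg_mul]
  rw [lintegral_congr hginner]
  have hstep1 : ∫⁻ u, g (T u) ∂(Measure.pi fun _ : {ik : Fin N × Fin K // p ik} => expMeasure 1)
      = ∫⁻ y, g ((⨅ k, y k) / c j) ∂(Measure.pi fun _ : Fin K => expMeasure 1) := by
    rw [show (fun u => g (T u)) = g ∘ T from rfl,
      ← (measurePreserving_piCongrLeft (fun _ : {ik : Fin N × Fin K // p ik} => expMeasure 1) e2).lintegral_comp
      (hgmeas.comp hTmeas)]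
    refine lintegral_congr fun y => ?_
    have hTy : T ((MeasurableEquiv.piCongrLeft (fun _ : {ik : Fin N × Fin K // p ik} => ℝ) e2) y)
        = (⨅ k, y k) / c j := by
      rw [hT]
      congr 1
    simp only [Function.comp_apply, hTy]
  rw [hstep1, (measurePreserving_min_div K hK (hc j)).lintegral_comp hgmeas,
    lintegral_exp_tail (mul_pos (Nat.cast_pos.2 hK) (hc j)) hbnn]
  -- arithmetic
  have hcard : (Fintype.card {ik : Fin N × Fin K // p ik}) = K :=
    (Fintype.card_congr e2.symm).trans (Fintype.card_fin K)
  have hsum1 : ∑ s : {ik : Fin N × Fin K // p ik}, c s.1.1 = K * c j := by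
    have hcj : ∀ s : {ik : Fin N × Fin K // p ik}, c s.1.1 = c j := fun s => by rw [s.2]
    rw [Finset.sum_congr rfl (fun s _ => hcj s), Finset.sum_const, Finset.card_univ, hcard,
      nsmul_eq_mul]
  have htot : ∑ ik : Fin N × Fin K, c ik.1 = K := by
    rw [Fintype.sum_prod_type]
    simp only [Finset.sum_const, Finset.card_univ, Fintype.card_fin, nsmul_eq_mul]
    rw [← Finset.mul_sum, hsum, mul_one]
  have hKb : (K : ℝ) * c j + b = K := by
    have hsplit := Fintype.sum_subtype_add_sum_subtype p (fun ik : Fin N × Fin K => c ik.1)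
    rw [hsum1, htot] at hsplit
    rw [← hb] at hsplit
    exact hsplit
  rw [hKb]
  congr 1
  have hKne : (K : ℝ) ≠ 0 := Nat.cast_ne_zero.2 hK.ne'
  rw [mul_comm, mul_div_assoc, div_self hKne, mul_one]

set_option maxHeartbeats 2000000 in
/-- **Conditional GLS samples the target correctly.**
Let `A` be a random variable with values in a countable alphabet, independent of the
i.i.d. `Exp(1)` family `S i k`, and for each value `a` let `q a` be a probability
mass function on `{1,…,N}` with `q a j > 0` for all `j`.  Let
`Y = argmin_i (min_k S i k) / q (A ·) i` (a.s. unique).  Then for every `a` with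
`Pr[A = a] > 0` and every `j`, `Pr[Y = j | A = a] = q a j`. -/
theorem conditional_gls_target_marginal
    {Ω : Type*} [MeasurableSpace Ω] (μ : Measure Ω) [IsProbabilityMeasure μ]
    {α : Type*} [MeasurableSpace α] [Countable α] [MeasurableSingletonClass α]
    (N K : ℕ) (hN : 0 < N) (hK : 0 < K)
    (A : Ω → α) (hAmeas : Measurable A)
    (q : α → Fin N → ℝ) (hq : ∀ a i, 0 < q a i) (hqsum : ∀ a, ∑ i, q a i = 1)
    (S : Fin N → Fin K → Ω → ℝ) (hSmeas : ∀ i k, Measurable (S i k))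
    (hSindep : iIndepFun
      (fun ik : Fin N × Fin K => S ik.1 ik.2) μ)
    (hSexp : ∀ i k, μ.map (S i k) = expMeasure 1)
    -- `A` is independent of the family `{S i k}`
    (hAS : IndepFun A (fun ω => fun ik : Fin N × Fin K => S ik.1 ik.2 ω) μ)
    (Y : Ω → Fin N) (hYmeas : Measurable Y)
    -- `Y` is a.s. the unique argmin of `i ↦ (min_k S i k) / q (A ω) i`
    (hY : ∀ᵐ ω ∂μ, ∀ i : Fin N, i ≠ Y ω →
      (⨅ k : Fin K, S (Y ω) k ω) / q (A ω) (Y ω) < (⨅ k : Fin K, S i k ω) / q (A ω) i) :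
    ∀ (a : α) (j : Fin N), μ {ω | A ω = a} ≠ 0 →
      μ[|{ω | A ω = a}] {ω | Y ω = j} = ENNReal.ofReal (q a j) := by
  intro a j ha
  haveI := isProbabilityMeasure_expMeasure one_pos
  haveI : Nonempty (Fin K) := ⟨⟨0, hK⟩⟩
  -- the joint vector of the exponential family
  set Φ : Ω → (Fin N × Fin K → ℝ) := fun ω ik => S ik.1 ik.2 ω with hΦ
  have hΦmeas : Measurable Φ := measurable_pi_lambda _ fun ik => hSmeas ik.1 ik.2
  -- its law is the product of `Exp(1)`s
  have hmap : μ.map Φ = Measure.pi (fun _ : Fin N × Fin K => expMeasure 1) := by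
    symm
    refine Measure.pi_eq fun s hs => ?_
    rw [Measure.map_apply hΦmeas (MeasurableSet.univ_pi hs)]
    have hpre : Φ ⁻¹' (Set.pi Set.univ s) = ⋂ ik : Fin N × Fin K, (S ik.1 ik.2) ⁻¹' (s ik) := by
      ext ω; simp [hΦ, Set.mem_pi]
    rw [hpre, hSindep.meas_iInter (fun ik => ⟨s ik, hs ik, rfl⟩)]
    exact Finset.prod_congr rfl fun ik _ => by
      rw [← Measure.map_apply (hSmeas ik.1 ik.2) (hs ik), hSexp ik.1 ik.2]
  -- the argmin event in the product space
  set B : Set (Fin N × Fin K → ℝ) :=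
    {x | ∀ i, i ≠ j → (⨅ k, x (j, k)) / q a j < (⨅ k, x (i, k)) / q a i} with hB
  have hf : ∀ i : Fin N, Measurable (fun x : Fin N × Fin K → ℝ => (⨅ k, x (i, k)) / q a i) :=
    fun i => (Measurable.iInf fun k => measurable_pi_apply (i, k)).div_const _
  have hBmeas : MeasurableSet B := by
    have hrw : B = ⋂ i : Fin N,
        {x : Fin N × Fin K → ℝ | i ≠ j → (⨅ k, x (j, k)) / q a j < (⨅ k, x (i, k)) / q a i} := by
      ext x; simp [hB, Set.mem_iInter]
    rw [hrw]
    refine MeasurableSet.iInter fun i => ?_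
    by_cases hi : i = j
    · have : {x : Fin N × Fin K → ℝ |
          i ≠ j → (⨅ k, x (j, k)) / q a j < (⨅ k, x (i, k)) / q a i} = Set.univ := by
        ext x; simp [hi]
      rw [this]; exact MeasurableSet.univ
    · have : {x : Fin N × Fin K → ℝ |
          i ≠ j → (⨅ k, x (j, k)) / q a j < (⨅ k, x (i, k)) / q a i}
          = {x : Fin N × Fin K → ℝ | (⨅ k, x (j, k)) / q a j < (⨅ k, x (i, k)) / q a i} := by
        ext x; simp [hi]
      rw [this]; exact measurableSet_lt (hf j) (hf i)
  -- probability of the argmin event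
  have hμB : μ (Φ ⁻¹' B) = ENNReal.ofReal (q a j) := by
    rw [← Measure.map_apply hΦmeas hBmeas, hmap]
    exact pi_argmin N K hN hK j (q a) (hq a) (hqsum a)
  -- independence of `A` and the argmin event
  have hAind : μ (A ⁻¹' {a} ∩ Φ ⁻¹' B) = μ (A ⁻¹' {a}) * μ (Φ ⁻¹' B) :=
    (indepFun_iff_measure_inter_preimage_eq_mul.1 hAS) {a} B (measurableSet_singleton a) hBmeas
  -- a.e. equality of events
  set sA : Set Ω := {ω | A ω = a} with hsA'
  set sY : Set Ω := {ω | Y ω = j} with hsY'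
  have hsets : (sA ∩ sY : Set Ω) =ᵐ[μ] ((sA ∩ Φ ⁻¹' B : Set Ω)) := by
    refine Filter.eventuallyEq_set.2 ?_
    filter_upwards [hY] with ω hω
    simp only [Set.mem_inter_iff, Set.mem_setOf_eq, Set.mem_preimage]
    constructor
    · rintro ⟨hA, hYj⟩
      refine ⟨hA, fun i hi => ?_⟩
      have h1 := hω i (by rw [hYj]; exact hi)
      rw [hYj, hA] at h1
      exact h1
    · rintro ⟨hA, hBx⟩
      refine ⟨hA, ?_⟩
      by_contra hne
      have h1 := hω j (Ne.symm hne)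
      rw [hA] at h1
      have h2 := hBx (Y ω) hne
      exact absurd h1 (lt_asymm h2)
  have hsA : MeasurableSet {ω | A ω = a} := hAmeas (measurableSet_singleton a)
  rw [cond_apply hsA μ, measure_congr hsets]
  have hx : (({ω | A ω = a} : Set Ω) ∩ Φ ⁻¹' B) = A ⁻¹' {a} ∩ Φ ⁻¹' B := rfl
  have hy : ({ω | A ω = a} : Set Ω) = A ⁻¹' {a} := rfl
  rw [hx, hy, hAind, ← mul_assoc, ENNReal.inv_mul_cancel (by rw [← hy]; exact ha)
    (measure_ne_top μ _), one_mul, hμB]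
end

section
/- Conditional list matching lemma: consider the following conditional GLS scheme. A is a random variable on a countable alphabet; {S_i^(k) : 1 ≤ i ≤ N, 1 ≤ k ≤ K} are i.i.d. Exp(1) random variables independent of A; for each a, q(·|a) is a probability mass function on {1,…,N} with q_j(a) > 0 for all j; the encoder sets Y = argmin_{1≤i≤N} min_{1≤k≤K} S_i^(k)/q_i(A). Given (Y, A) = (j, a), random variables Z_1, …, Z_K taking values in a countable alphabet are drawn i.i.d. from a conditional distribution p_{Z|Y,A}(·|j, a), conditionally independent of the family {S_i^(k)} given (Y, A). For each z in the Z-alphabet, p(·|z) is a probability mass function on {1,…,N} with p_j(z) > 0 for all j, and decoder k sets X^(k) = argmin_{1≤i≤N} S_i^(k)/p_i(Z_k). Then for every j ∈ {1,…,N}, every a with Pr[A = a] > 0, and every tuple (z_1,…,z_K) with Pr[Y = j, A = a, Z_1 = z_1, …, Z_K = z_K] > 0: Pr[Y ∈ {X^(1), …, X^(K)} | Y = j, A = a, Z_1 = z_1, …, Z_K = z_K] ≥ Σ_{k=1}^{K} ( K + q_j(a)/p_j(z_k) )^{−1}. (Theorem 2.) -/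
open MeasureTheory ProbabilityTheory Real Set


namespace CLML

lemma expMeasure_eq : expMeasure 1 = volume.withDensity (exponentialPDF 1) := rfl

lemma exp_Iic (x : ℝ) : expMeasure 1 (Iic x) =
    ENNReal.ofReal (if 0 ≤ x then 1 - Real.exp (-x) else 0) := by
  rw [expMeasure_eq, withDensity_apply _ measurableSet_Iic,
    lintegral_exponentialPDF_eq_antiDeriv one_pos]
  simp [one_mul]

lemma exp_Iio_zero : expMeasure 1 (Iio 0) = 0 := by
  rw [expMeasure_eq, withDensity_apply _ measurableSet_Iio]
  exact lintegral_exponentialPDF_of_nonpos le_rfl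

lemma exp_singleton (x : ℝ) : expMeasure 1 {x} = 0 := by
  rw [expMeasure_eq]
  exact (withDensity_absolutelyContinuous _ _) (Real.volume_singleton)

instance : IsProbabilityMeasure (expMeasure 1) := isProbabilityMeasure_expMeasure one_pos

lemma exp_Ioi {x : ℝ} (hx : 0 ≤ x) :
    expMeasure 1 (Ioi x) = ENNReal.ofReal (Real.exp (-x)) := by
  have h : Ioi x = (Iic x)ᶜ := by simp
  have hle : Real.exp (-x) ≤ 1 := Real.exp_le_one_iff.2 (by linarith)
  rw [h, measure_compl measurableSet_Iic (measure_ne_top _ _), exp_Iic, if_pos hx,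
    measure_univ]
  rw [← ENNReal.ofReal_one, ← ENNReal.ofReal_sub _ (by linarith)]
  ring_nf

lemma measurable_exponentialPDF : Measurable (exponentialPDF 1) :=
  (measurable_exponentialPDFReal 1).ennreal_ofReal

lemma exp_lintegral {c : ℝ} (hc : 0 ≤ c) :
    ∫⁻ x, ENNReal.ofReal (Real.exp (-(c * x))) ∂(expMeasure 1)
      = ENNReal.ofReal ((1 + c)⁻¹) := by
  have hb : (0:ℝ) < 1 + c := by linarith
  rw [expMeasure_eq, lintegral_withDensity_eq_lintegral_mul _ measurable_exponentialPDF
    (by fun_prop)]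
  have hpt : ∀ x : ℝ, exponentialPDF 1 x * ENNReal.ofReal (Real.exp (-(c * x)))
      = Set.indicator (Ici 0) (fun x => ENNReal.ofReal (Real.exp (-((1 + c) * x)))) x := by
    intro x
    by_cases hx : 0 ≤ x
    · rw [Set.indicator_of_mem (show x ∈ Ici 0 from hx), exponentialPDF_of_nonneg hx,
        ← ENNReal.ofReal_mul (by positivity)]
      congr 1
      rw [one_mul, ← Real.exp_add]
      ring_nf
    · rw [Set.indicator_of_notMem (show x ∉ Ici 0 from hx), exponentialPDF_of_neg
        (lt_of_not_ge hx), zero_mul]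
  calc ∫⁻ x, exponentialPDF 1 x * ENNReal.ofReal (Real.exp (-(c * x))) ∂volume
      = ∫⁻ x, Set.indicator (Ici 0) (fun x => ENNReal.ofReal (Real.exp (-((1 + c) * x)))) x
          ∂volume := lintegral_congr hpt
    _ = ∫⁻ x in Ici 0, ENNReal.ofReal (Real.exp (-((1 + c) * x))) ∂volume := by
          rw [lintegral_indicator measurableSet_Ici]
    _ = ∫⁻ x in Ioi 0, ENNReal.ofReal (Real.exp (-((1 + c) * x))) ∂volume := by
          rw [setLIntegral_congr (Ioi_ae_eq_Ici (μ := volume) (a := 0))]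
    _ = ENNReal.ofReal (∫ x in Ioi 0, Real.exp (-((1 + c) * x)) ∂volume) := by
          rw [← ofReal_integral_eq_lintegral_ofReal]
          · exact (exp_neg_integrableOn_Ioi 0 hb).congr
              (Filter.Eventually.of_forall fun x => by norm_num; ring_nf)
          · exact Filter.Eventually.of_forall fun x => (Real.exp_pos _).le
    _ = ENNReal.ofReal ((1 + c)⁻¹) := by
          congr 1
          rw [integral_comp_mul_left_Ioi (fun y => Real.exp (-y)) 0 hb]
          simp [integral_exp_neg_Ioi, integral_exp_Iic_zero]

variable {Ω : Type*} [MeasurableSpace Ω] {μ : Measure Ω} [IsProbabilityMeasure μ]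

lemma exp_pos_ae {f : Ω → ℝ} (hf : Measurable f) (hmap : μ.map f = expMeasure 1) :
    ∀ᵐ ω ∂μ, 0 < f ω := by
  rw [ae_iff]
  have h : {ω | ¬ 0 < f ω} = f ⁻¹' (Iic 0) := by ext ω; simp
  rw [h, ← Measure.map_apply hf measurableSet_Iic, hmap, exp_Iic]
  simp

lemma exp_ne_ae {f g : Ω → ℝ} (hf : Measurable f) (hg : Measurable g)
    (hind : IndepFun f g μ) (hmf : μ.map f = expMeasure 1)
    (hmg : μ.map g = expMeasure 1) : ∀ᵐ ω ∂μ, f ω ≠ g ω := by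
  rw [ae_iff]
  have hD : MeasurableSet {x : ℝ × ℝ | x.1 = x.2} :=
    measurableSet_eq_fun measurable_fst measurable_snd
  have h : {ω | ¬ f ω ≠ g ω} = (fun ω => (f ω, g ω)) ⁻¹' {x : ℝ × ℝ | x.1 = x.2} := by
    ext ω; simp
  rw [h, ← Measure.map_apply (hf.prodMk hg) hD,
    (indepFun_iff_map_prod_eq_prod_map_map hf.aemeasurable hg.aemeasurable).mp hind,
    hmf, hmg, Measure.prod_apply hD]
  have hs : ∀ u : ℝ, (Prod.mk u ⁻¹' {x : ℝ × ℝ | x.1 = x.2}) = {u} := by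
    intro u; ext v; simp [eq_comm]
  simp only [hs]
  simp [exp_singleton]

lemma race_lemma (μ : Measure Ω) [IsProbabilityMeasure μ]
    {ι : Type*} [Fintype ι]
    (f : ι → Ω → ℝ) (hmeas : ∀ m, Measurable (f m))
    (hindep : iIndepFun f μ)
    (hexp : ∀ m, μ.map (f m) = expMeasure 1)
    (m₀ : ι) (c : ι → ℝ) (hc0 : c m₀ = 0) (hc : ∀ m, m ≠ m₀ → 0 < c m) :
    μ {ω | ∀ m, m ≠ m₀ → c m * f m₀ ω < f m ω}
      = ENNReal.ofReal ((1 + ∑ m, c m)⁻¹) := by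
  classical
  set T : Finset ι := Finset.univ.erase m₀ with hT
  have hmemT : ∀ m, m ∈ T ↔ m ≠ m₀ := by intro m; simp [hT]
  set C : ℝ := ∑ m, c m with hC
  have hcnonneg : ∀ m, 0 ≤ c m := by
    intro m
    by_cases h : m = m₀
    · simp [h, hc0]
    · exact (hc m h).le
  have hCnonneg : 0 ≤ C := Finset.sum_nonneg fun m _ => hcnonneg m
  have hCT : ∑ m ∈ T, c m = C := Finset.sum_erase _ hc0
  set U : Ω → ℝ := f m₀ with hU
  set V : Ω → (T → ℝ) := fun ω m => f (↑m) ω with hV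
  have hUmeas : Measurable U := hmeas m₀
  have hVmeas : Measurable V := measurable_pi_lambda _ fun m => hmeas _
  have hUV : IndepFun U V μ := by
    have hdisj : Disjoint ({m₀} : Finset ι) T := by
      simp [hT, Finset.disjoint_left]
    have h := hindep.indepFun_finset {m₀} T hdisj hmeas
    have h2 := h.comp (φ := fun v : ({m₀} : Finset ι) → ℝ =>
      v ⟨m₀, Finset.mem_singleton_self m₀⟩) (ψ := id)
      (_mγ := inferInstance) (measurable_pi_apply _) measurable_id
    exact h2
  have hmapV : IsProbabilityMeasure (μ.map V) := Measure.isProbabilityMeasure_map hVmeas.aemeasurable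
  set Q : Set (ℝ × (T → ℝ)) := {x | ∀ m : T, c m * x.1 < x.2 m} with hQ
  have hQmeas : MeasurableSet Q := by
    have : Q = ⋂ m : T, {x : ℝ × (T → ℝ) | c m * x.1 < x.2 m} := by
      ext x; simp [hQ]
    rw [this]
    exact MeasurableSet.iInter fun m => measurableSet_lt (by fun_prop) (by fun_prop)
  have hpre : {ω | ∀ m, m ≠ m₀ → c m * f m₀ ω < f m ω}
      = (fun ω => (U ω, V ω)) ⁻¹' Q := by
    ext ω
    simp only [mem_setOf_eq, mem_preimage, hQ, Subtype.forall]
    constructor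
    · intro h m hm; exact h m ((hmemT m).1 hm)
    · intro h m hm; exact h m ((hmemT m).2 hm)
  have hmap : μ.map (fun ω => (U ω, V ω)) = (expMeasure 1).prod (μ.map V) := by
    rw [(indepFun_iff_map_prod_eq_prod_map_map hUmeas.aemeasurable
      hVmeas.aemeasurable).mp hUV, hexp m₀]
  have hslice : ∀ u : ℝ, 0 ≤ u →
      (μ.map V) (Prod.mk u ⁻¹' Q) = ENNReal.ofReal (Real.exp (-(C * u))) := by
    intro u hu
    have hsliceQ : MeasurableSet (Prod.mk u ⁻¹' Q) := hQmeas.preimage (by fun_prop)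
    rw [Measure.map_apply hVmeas hsliceQ]
    have hpre2 : V ⁻¹' (Prod.mk u ⁻¹' Q) = ⋂ m ∈ T, f m ⁻¹' Ioi (c m * u) := by
      ext ω
      simp [hQ, hV, Subtype.forall]
    rw [hpre2, hindep.meas_biInter (fun m hm => ⟨Ioi (c m * u), measurableSet_Ioi, rfl⟩)]
    have hfac : ∀ m ∈ T, μ (f m ⁻¹' Ioi (c m * u)) = ENNReal.ofReal (Real.exp (-(c m * u))) := by
      intro m hm
      rw [← Measure.map_apply (hmeas m) measurableSet_Ioi, hexp m,
        exp_Ioi (mul_nonneg (hcnonneg m) hu)]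
    rw [Finset.prod_congr rfl hfac, ← ENNReal.ofReal_prod_of_nonneg
      (fun m _ => (Real.exp_pos _).le)]
    congr 1
    rw [← Real.exp_sum]
    congr 1
    rw [← hCT, Finset.sum_mul, ← Finset.sum_neg_distrib]
  calc μ {ω | ∀ m, m ≠ m₀ → c m * f m₀ ω < f m ω}
      = μ.map (fun ω => (U ω, V ω)) Q := by
        rw [Measure.map_apply (hUmeas.prodMk hVmeas) hQmeas, hpre]
    _ = ∫⁻ u, (μ.map V) (Prod.mk u ⁻¹' Q) ∂(expMeasure 1) := by
        rw [hmap, Measure.prod_apply hQmeas]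
    _ = ∫⁻ u, ENNReal.ofReal (Real.exp (-(C * u))) ∂(expMeasure 1) := by
        apply lintegral_congr_ae
        have hsub : {u : ℝ | ¬ ((μ.map V) (Prod.mk u ⁻¹' Q)
            = ENNReal.ofReal (Real.exp (-(C * u))))} ⊆ Iio 0 := by
          intro u hu
          by_contra h
          exact hu (hslice u (not_lt.mp (fun hlt => h hlt)))
        exact measure_mono_null hsub exp_Iio_zero
    _ = ENNReal.ofReal ((1 + C)⁻¹) := exp_lintegral hCnonneg

lemma inf_eq_min {K : ℕ} (hK : 0 < K) (g : Fin K → ℝ) :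
    ∃ k₀, (⨅ k, g k) = g k₀ ∧ ∀ k, g k₀ ≤ g k := by
  have : Nonempty (Fin K) := ⟨⟨0, hK⟩⟩
  obtain ⟨k₀, hk₀⟩ := Finite.exists_min g
  exact ⟨k₀, le_antisymm (ciInf_le (Finite.bddBelow_range g) k₀) (le_ciInf hk₀), hk₀⟩





lemma row_sum {K : ℕ} (hK : 0 < K) (k : Fin K) (g : Fin K → ℝ) (x y : ℝ)
    (hgk : g k = x) (hg : ∀ k', k' ≠ k → g k' = y) :
    ∑ k', g k' = x + ((K:ℝ) - 1) * y := by
  classical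
  rw [← Finset.add_sum_erase _ _ (Finset.mem_univ k), hgk]
  congr 1
  rw [Finset.sum_congr rfl (fun k' hk' => hg k' (Finset.ne_of_mem_erase hk')),
    Finset.sum_const, Finset.card_erase_of_mem (Finset.mem_univ k), Finset.card_univ,
    Fintype.card_fin, nsmul_eq_mul, Nat.cast_sub hK, Nat.cast_one]

lemma prod_sum_eval {N K : ℕ} (hK : 0 < K) (j : Fin N) (k : Fin K)
    (c : Fin N × Fin K → ℝ) (r s : Fin N → ℝ)
    (hcjk : c (j, k) = 0) (hcj : ∀ k', k' ≠ k → c (j, k') = 1)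
    (hrow : ∀ i, i ≠ j → ∀ k', c (i, k') = if k' = k then s i else r i) :
    ∑ m, c m = ((K:ℝ) - 1)
      + ∑ i ∈ Finset.univ.erase j, (s i + ((K:ℝ) - 1) * r i) := by
  classical
  rw [Fintype.sum_prod_type, ← Finset.add_sum_erase _ _ (Finset.mem_univ j)]
  congr 1
  · rw [row_sum hK k _ 0 1 hcjk hcj]; ring
  · refine Finset.sum_congr rfl fun i hi => ?_
    have hij : i ≠ j := Finset.ne_of_mem_erase hi
    exact row_sum hK k _ (s i) (r i) (by rw [hrow i hij k, if_pos rfl])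
      (fun k' hk' => by rw [hrow i hij k', if_neg hk'])

lemma erase_sum_eq {N : ℕ} (j : Fin N) (v : Fin N → ℝ) (hv : ∑ i, v i = 1) :
    ∑ i ∈ Finset.univ.erase j, v i = 1 - v j := by
  rw [Finset.sum_erase_eq_sub (Finset.mem_univ j), hv]

lemma real_key {K : ℕ} (hK : 0 < K) {qj pj Cval : ℝ} (hqj : 0 < qj) (hpj : 0 < pj)
    (hC0 : 0 ≤ Cval) (hC : Cval ≤ (K:ℝ)/qj + 1/pj - 2) :
    qj * ((K:ℝ) + qj/pj)⁻¹ ≤ (1 + Cval)⁻¹ := by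
  have hKr : (1:ℝ) ≤ (K:ℝ) := by exact_mod_cast hK
  have hD : (0:ℝ) < (K:ℝ) + qj/pj := by positivity
  have h1 : (0:ℝ) < 1 + Cval := by linarith
  have h2 : 1 + Cval ≤ ((K:ℝ) + qj/pj)/qj := by
    have : ((K:ℝ) + qj/pj)/qj = (K:ℝ)/qj + 1/pj := by
      field_simp
    rw [this]; linarith
  calc qj * ((K:ℝ) + qj/pj)⁻¹ = (((K:ℝ) + qj/pj)/qj)⁻¹ := by
        rw [inv_div]; field_simp
    _ ≤ (1 + Cval)⁻¹ := by
        exact inv_anti₀ h1 h2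


end CLML




open MeasureTheory ProbabilityTheory

/-- **Conditional list matching lemma (Theorem 2).**
The encoder observes `A` and selects `Y = argmin_i (min_k S i k) / q (A ·) i` from the
shared i.i.d. `Exp(1)` family `{S i k}` (independent of `A`).  Given `(Y, A) = (j, a)`,
the variables `Z 1, …, Z K` are drawn i.i.d. from a conditional pmf `pZ j a`,
conditionally independent of `{S i k}` given `(Y, A)` (the Markov chain
`{S i k} → (Y, A) → (Z 1, …, Z K)`).  Decoder `k` selects
`X k = argmin_i S i k / p (Z k ·) i`.  Then for all `j`, `a`, `z 1, …, z K` with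
`Pr[Y = j, A = a, Z = z] > 0`,
`Pr[Y ∈ {X 1, …, X K} | Y = j, A = a, Z = z] ≥ ∑ k, (K + q a j / p (z k) j)⁻¹`. -/
theorem conditional_list_matching_lemma
    {Ω : Type*} [MeasurableSpace Ω] (μ : Measure Ω) [IsProbabilityMeasure μ]
    {α : Type*} [MeasurableSpace α] [Countable α] [MeasurableSingletonClass α]
    {ζ : Type*} [MeasurableSpace ζ] [Countable ζ] [MeasurableSingletonClass ζ]
    (N K : ℕ) (hN : 0 < N) (hK : 0 < K)
    (A : Ω → α) (hAmeas : Measurable A)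
    (q : α → Fin N → ℝ) (hq : ∀ a i, 0 < q a i) (hqsum : ∀ a, ∑ i, q a i = 1)
    (p : ζ → Fin N → ℝ) (hp : ∀ z i, 0 < p z i) (hpsum : ∀ z, ∑ i, p z i = 1)
    (S : Fin N → Fin K → Ω → ℝ) (hSmeas : ∀ i k, Measurable (S i k))
    (hSindep : iIndepFun
      (fun ik : Fin N × Fin K => S ik.1 ik.2) μ)
    (hSexp : ∀ i k, μ.map (S i k) = expMeasure 1)
    -- `A` is independent of the family `{S i k}`
    (hAS : IndepFun A (fun ω => fun ik : Fin N × Fin K => S ik.1 ik.2 ω) μ)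
    (Y : Ω → Fin N) (hYmeas : Measurable Y)
    -- `Y` is a.s. the unique argmin of `i ↦ (min_k S i k) / q (A ω) i`
    (hY : ∀ᵐ ω ∂μ, ∀ i : Fin N, i ≠ Y ω →
      (⨅ k : Fin K, S (Y ω) k ω) / q (A ω) (Y ω) < (⨅ k : Fin K, S i k ω) / q (A ω) i)
    (Z : Fin K → Ω → ζ) (hZmeas : ∀ k, Measurable (Z k))
    -- the conditional pmf `p_{Z∣Y,A}` of each `Z k` given `(Y, A)`
    (pZ : Fin N → α → ζ → ℝ) (hpZ : ∀ j a z, 0 ≤ pZ j a z)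
    (hpZsum : ∀ j a, ∑' z : ζ, pZ j a z = 1)
    -- given `(Y, A) = (j, a)`, the `Z k` are i.i.d. with pmf `pZ j a`
    (hZiid : ∀ (j : Fin N) (a : α) (z : Fin K → ζ),
      μ ({ω | Y ω = j} ∩ {ω | A ω = a} ∩ {ω | ∀ k, Z k ω = z k})
        = μ ({ω | Y ω = j} ∩ {ω | A ω = a}) * ENNReal.ofReal (∏ k, pZ j a (z k)))
    -- Markov chain `{S i k} → (Y, A) → (Z 1, …, Z K)`: the `Z k` are conditionally
    -- independent of the shared randomness given `(Y, A)`
    (hMarkov : ∀ (j : Fin N) (a : α) (z : Fin K → ζ)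
        (E : Set ((Fin N × Fin K) → ℝ)), MeasurableSet E →
      μ ({ω | (fun ik : Fin N × Fin K => S ik.1 ik.2 ω) ∈ E} ∩
            ({ω | Y ω = j} ∩ {ω | A ω = a} ∩ {ω | ∀ k, Z k ω = z k}))
          * μ ({ω | Y ω = j} ∩ {ω | A ω = a})
        = μ ({ω | (fun ik : Fin N × Fin K => S ik.1 ik.2 ω) ∈ E} ∩
              ({ω | Y ω = j} ∩ {ω | A ω = a}))
          * μ ({ω | Y ω = j} ∩ {ω | A ω = a} ∩ {ω | ∀ k, Z k ω = z k}))
    (X : Fin K → Ω → Fin N) (hXmeas : ∀ k, Measurable (X k))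
    -- `X k` is a.s. the unique argmin of `i ↦ S i k / p (Z k ω) i`
    (hX : ∀ᵐ ω ∂μ, ∀ k : Fin K, ∀ i : Fin N, i ≠ X k ω →
      S (X k ω) k ω / p (Z k ω) (X k ω) < S i k ω / p (Z k ω) i) :
    ∀ (j : Fin N) (a : α) (z : Fin K → ζ),
      μ ({ω | Y ω = j} ∩ {ω | A ω = a} ∩ {ω | ∀ k, Z k ω = z k}) ≠ 0 →
      ENNReal.ofReal (∑ k : Fin K, ((K : ℝ) + q a j / p (z k) j)⁻¹)
        ≤ μ[|{ω | Y ω = j} ∩ {ω | A ω = a} ∩ {ω | ∀ k, Z k ω = z k}]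
            {ω | ∃ k : Fin K, X k ω = Y ω} := by
    classical
  intro j a z hB
  -- basic sets
  set Yset : Set Ω := {ω | Y ω = j} with hYset
  set Aset : Set Ω := {ω | A ω = a} with hAset
  set Zset : Set Ω := {ω | ∀ k, Z k ω = z k} with hZset
  set Cset : Set Ω := Yset ∩ Aset with hCset
  set B : Set Ω := Cset ∩ Zset with hBdef
  have hYsetM : MeasurableSet Yset := hYmeas (measurableSet_singleton j)
  have hAsetM : MeasurableSet Aset := hAmeas (measurableSet_singleton a)
  have hZsetM : MeasurableSet Zset := by
    have : Zset = ⋂ k, (Z k) ⁻¹' {z k} := by ext ω; simp [hZset]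
    rw [this]
    exact MeasurableSet.iInter fun k => (hZmeas k) (measurableSet_singleton (z k))
  have hCsetM : MeasurableSet Cset := hYsetM.inter hAsetM
  have hBM : MeasurableSet B := hCsetM.inter hZsetM
  -- positivity of the conditioning events
  have hBC : B ⊆ Cset := Set.inter_subset_left
  have hCA : Cset ⊆ Aset := Set.inter_subset_right
  have hCne : μ Cset ≠ 0 := fun h => hB (le_antisymm (h ▸ measure_mono hBC) zero_le)
  have hAne : μ Aset ≠ 0 := fun h => hCne (le_antisymm (h ▸ measure_mono hCA) zero_le)
  have hBtop : μ B ≠ ⊤ := measure_ne_top _ _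
  have hCtop : μ Cset ≠ ⊤ := measure_ne_top _ _
  -- the shared randomness vector
  set f : Fin N × Fin K → Ω → ℝ := fun ik => S ik.1 ik.2 with hfdef
  set Svec : Ω → Fin N × Fin K → ℝ := fun ω ik => S ik.1 ik.2 ω with hSvecdef
  have hSvecMeas : Measurable Svec :=
    measurable_pi_lambda _ fun m => hSmeas m.1 m.2
  -- a.e. facts
  have hposS : ∀ᵐ ω ∂μ, ∀ i k, 0 < S i k ω := by
    rw [ae_all_iff]
    intro i
    rw [ae_all_iff]
    intro k
    exact CLML.exp_pos_ae (hSmeas i k) (hSexp i k)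
  have hdistS : ∀ᵐ ω ∂μ, ∀ (k k' : Fin K), k ≠ k' → S j k ω ≠ S j k' ω := by
    rw [ae_all_iff]
    intro k
    rw [ae_all_iff]
    intro k'
    rcases eq_or_ne k k' with h | h
    · simp [h]
    · have hind : IndepFun (S j k) (S j k') μ :=
        hSindep.indepFun (i := (j, k)) (j := (j, k')) (by simp [h])
      filter_upwards [CLML.exp_ne_ae (hSmeas j k) (hSmeas j k') hind
        (hSexp j k) (hSexp j k')] with ω hω _
      exact hω
  -- coefficient families
  set cf : Fin K → Fin N × Fin K → ℝ := fun k m =>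
    if m.1 = j then (if m.2 = k then 0 else 1)
    else (if m.2 = k then max (q a m.1 / q a j) (p (z k) m.1 / p (z k) j)
          else q a m.1 / q a j) with hcf
  set cf' : Fin K → Fin N × Fin K → ℝ := fun k m =>
    if m.1 = j then (if m.2 = k then 0 else 1) else q a m.1 / q a j with hcf'
  have hc0 : ∀ k, cf k (j, k) = 0 := by intro k; simp [hcf]
  have hc0' : ∀ k, cf' k (j, k) = 0 := by intro k; simp [hcf']
  have hne_of : ∀ (k : Fin K) (m : Fin N × Fin K), m ≠ (j, k) → m.1 = j → m.2 ≠ k := by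
    intro k m hm h1 h2
    exact hm (Prod.ext h1 h2)
  have hcpos : ∀ k m, m ≠ (j, k) → 0 < cf k m := by
    intro k m hm
    by_cases h1 : m.1 = j
    · simp [hcf, h1, hne_of k m hm h1]
    · by_cases h2 : m.2 = k
      · simp only [hcf, if_neg h1, if_pos h2]
        exact lt_max_of_lt_left (div_pos (hq a m.1) (hq a j))
      · simp only [hcf, if_neg h1, if_neg h2]
        exact div_pos (hq a m.1) (hq a j)
  have hcpos' : ∀ k m, m ≠ (j, k) → 0 < cf' k m := by
    intro k m hm
    by_cases h1 : m.1 = j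
    · simp [hcf', h1, hne_of k m hm h1]
    · simp only [hcf', if_neg h1]
      exact div_pos (hq a m.1) (hq a j)
  -- the race events (as subsets of the path space)
  set Efun : Fin K → Set ((Fin N × Fin K) → ℝ) := fun k =>
    {s | ∀ m, m ≠ (j, k) → cf k m * s (j, k) < s m} with hEfun
  set Efun' : Fin K → Set ((Fin N × Fin K) → ℝ) := fun k =>
    {s | ∀ m, m ≠ (j, k) → cf' k m * s (j, k) < s m} with hEfun'
  have hEmeas : ∀ k, MeasurableSet (Efun k) := by
    intro k
    have : Efun k = ⋂ m, ⋂ (_ : m ≠ (j, k)), {s : (Fin N × Fin K) → ℝ |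
        cf k m * s (j, k) < s m} := by
      ext s; simp [hEfun]
    rw [this]
    exact MeasurableSet.iInter fun m => MeasurableSet.iInter fun _ =>
      measurableSet_lt (by fun_prop) (by fun_prop)
  have hEmeas' : ∀ k, MeasurableSet (Efun' k) := by
    intro k
    have : Efun' k = ⋂ m, ⋂ (_ : m ≠ (j, k)), {s : (Fin N × Fin K) → ℝ |
        cf' k m * s (j, k) < s m} := by
      ext s; simp [hEfun']
    rw [this]
    exact MeasurableSet.iInter fun m => MeasurableSet.iInter fun _ =>
      measurableSet_lt (by fun_prop) (by fun_prop)
  -- race values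
  have hrace : ∀ k, μ (Svec ⁻¹' Efun k)
      = ENNReal.ofReal ((1 + ∑ m, cf k m)⁻¹) := by
    intro k
    exact CLML.race_lemma μ f (fun m => hSmeas m.1 m.2) hSindep
      (fun m => hSexp m.1 m.2) (j, k) (cf k) (hc0 k) (hcpos k)
  have hrace' : ∀ k, μ (Svec ⁻¹' Efun' k)
      = ENNReal.ofReal ((1 + ∑ m, cf' k m)⁻¹) := by
    intro k
    exact CLML.race_lemma μ f (fun m => hSmeas m.1 m.2) hSindep
      (fun m => hSexp m.1 m.2) (j, k) (cf' k) (hc0' k) (hcpos' k)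
  -- helper: a.e. implication gives measure inequality
  have measure_le_of_ae_imp : ∀ {s t : Set Ω}, (∀ᵐ ω ∂μ, ω ∈ s → ω ∈ t) → μ s ≤ μ t := by
    intro s t h
    calc μ s ≤ μ (t ∪ (s \ t)) :=
          measure_mono (fun ω hω => (em (ω ∈ t)).elim Or.inl (fun ht => Or.inr ⟨hω, ht⟩))
      _ ≤ μ t + μ (s \ t) := measure_union_le _ _
      _ = μ t := by
          have hnull : μ (s \ t) = 0 := by
            refine measure_mono_null ?_ (ae_iff.mp h)
            rintro ω ⟨hs, hnt⟩
            simp only [Set.mem_setOf_eq, Classical.not_imp]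
            exact ⟨hs, hnt⟩
          rw [hnull, add_zero]
  -- nonnegativity of the coefficients
  have hcnn : ∀ k m, 0 ≤ cf k m := by
    intro k m
    rcases eq_or_ne m (j, k) with h | h
    · rw [h, hc0 k]
    · exact (hcpos k m h).le
  -- (II) on the race event (and B), some decoder matches
  have hXin : ∀ k : Fin K, ∀ᵐ ω ∂μ,
      ω ∈ Svec ⁻¹' Efun k ∩ B → ω ∈ {ω | ∃ k', X k' ω = Y ω} := by
    intro k
    filter_upwards [hX, hposS] with ω hXω hposω
    rintro ⟨hEω, ⟨⟨hYω, hAω⟩, hZω⟩⟩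
    have hYj : Y ω = j := hYω
    refine ⟨k, ?_⟩
    rw [hYj]
    by_contra hne
    have hZk : Z k ω = z k := hZω k
    have h1 := hXω k j (fun h => hne h.symm)
    rw [hZk] at h1
    have hij : X k ω ≠ j := hne
    have h2 : cf k (X k ω, k) * S j k ω < S (X k ω) k ω :=
      hEω (X k ω, k) (fun h => hij (congrArg Prod.fst h))
    have hval : cf k (X k ω, k) = max (q a (X k ω) / q a j)
        (p (z k) (X k ω) / p (z k) j) := by
      simp [hcf, hij]
    rw [hval] at h2
    have h3 : p (z k) (X k ω) / p (z k) j * S j k ω < S (X k ω) k ω :=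
      lt_of_le_of_lt (mul_le_mul_of_nonneg_right (le_max_right _ _) (hposω j k).le) h2
    have h4 : S j k ω / p (z k) j < S (X k ω) k ω / p (z k) (X k ω) := by
      rw [div_lt_div_iff₀ (hp (z k) j) (hp (z k) (X k ω))]
      have h5 : p (z k) (X k ω) / p (z k) j * S j k ω
          = p (z k) (X k ω) * S j k ω / p (z k) j := by ring
      rw [h5, div_lt_iff₀ (hp (z k) j)] at h3
      linarith [mul_comm (S j k ω) (p (z k) (X k ω)), h3]
    exact absurd h1 (not_lt.mpr h4.le)
  -- (III) on the race event (and {A = a}), the encoder output is j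
  have hYin : ∀ k : Fin K, ∀ᵐ ω ∂μ,
      ω ∈ Svec ⁻¹' Efun k ∩ Aset → ω ∈ Yset := by
    intro k
    filter_upwards [hY, hposS] with ω hYω hposω
    rintro ⟨hEω, hAω⟩
    have hAa : A ω = a := hAω
    show Y ω = j
    by_contra hne
    have h := hYω j (fun h => hne h.symm)
    rw [hAa] at h
    have hij : Y ω ≠ j := hne
    obtain ⟨k₀, hk₀eq, hk₀min⟩ := CLML.inf_eq_min hK (fun k' => S (Y ω) k' ω)
    have hqs : q a (Y ω) / q a j * S j k ω < S (Y ω) k₀ ω := by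
      have h2 : cf k (Y ω, k₀) * S j k ω < S (Y ω) k₀ ω :=
        hEω (Y ω, k₀) (fun hh => hij (congrArg Prod.fst hh))
      have hle : q a (Y ω) / q a j ≤ cf k (Y ω, k₀) := by
        by_cases h3 : k₀ = k
        · simp only [hcf, if_neg hij, if_pos h3]
          exact le_max_left _ _
        · simp only [hcf, if_neg hij, if_neg h3]
          exact le_rfl
      calc q a (Y ω) / q a j * S j k ω ≤ cf k (Y ω, k₀) * S j k ω :=
            mul_le_mul_of_nonneg_right hle (hposω j k).le
        _ < S (Y ω) k₀ ω := h2
    have hub : (⨅ k', S j k' ω) / q a j < (⨅ k', S (Y ω) k' ω) / q a (Y ω) := by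
      have h5 : (⨅ k', S j k' ω) ≤ S j k ω :=
        ciInf_le (Finite.bddBelow_range _) k
      rw [hk₀eq, div_lt_div_iff₀ (hq a j) (hq a (Y ω))]
      have h8 : q a (Y ω) / q a j * S j k ω = q a (Y ω) * S j k ω / q a j := by ring
      rw [h8, div_lt_iff₀ (hq a j)] at hqs
      have h9 : (⨅ k', S j k' ω) * q a (Y ω) ≤ S j k ω * q a (Y ω) :=
        mul_le_mul_of_nonneg_right h5 (hq a (Y ω)).le
      linarith [mul_comm (S j k ω) (q a (Y ω))]
    exact absurd h (not_lt.mpr hub.le)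
  -- (IV) a.e., {Y = j, A = a} is covered by the q-race events
  have hCin : ∀ᵐ ω ∂μ, ω ∈ Cset → ω ∈ ⋃ k, (Svec ⁻¹' Efun' k ∩ Aset) := by
    filter_upwards [hY, hposS, hdistS] with ω hYω hposω hdistω
    rintro ⟨hYj', hAω⟩
    have hYj : Y ω = j := hYj'
    have hAa : A ω = a := hAω
    obtain ⟨k₀, hk₀eq, hk₀min⟩ := CLML.inf_eq_min hK (fun k' => S j k' ω)
    refine Set.mem_iUnion.2 ⟨k₀, ⟨?_, hAω⟩⟩
    intro m hm
    obtain ⟨i, k'⟩ := m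
    show cf' k₀ (i, k') * S j k₀ ω < S i k' ω
    by_cases hij : i = j
    · subst hij
      have hkk : k' ≠ k₀ := hne_of k₀ (i, k') hm rfl
      simp only [hcf', if_pos rfl, if_neg hkk, one_mul]
      exact lt_of_le_of_ne (hk₀min k') (hdistω k₀ k' (Ne.symm hkk))
    · have h2 := hYω i (by rw [hYj]; exact hij)
      rw [hAa, hYj] at h2
      have h5 : (⨅ k'', S i k'' ω) ≤ S i k' ω :=
        ciInf_le (Finite.bddBelow_range _) k'
      rw [hk₀eq, div_lt_div_iff₀ (hq a j) (hq a i)] at h2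
      simp only [hcf', if_neg hij]
      rw [div_mul_eq_mul_div, div_lt_iff₀ (hq a j)]
      have h9 : (⨅ k'', S i k'' ω) * q a j ≤ S i k' ω * q a j :=
        mul_le_mul_of_nonneg_right h5 (hq a j).le
      linarith [mul_comm (q a i) (S j k₀ ω)]
  -- disjointness of the race events
  have hdisj : Pairwise (Function.onFun Disjoint (fun k => Svec ⁻¹' Efun k ∩ B)) := by
    intro k k' hkk'
    rw [Function.onFun, Set.disjoint_left]
    rintro ω ⟨hE1, _⟩ ⟨hE2, _⟩
    have h1 : cf k (j, k') * S j k ω < S j k' ω :=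
      hE1 (j, k') (fun h => hkk' ((congrArg Prod.snd h).symm))
    have h2 : cf k' (j, k) * S j k' ω < S j k ω :=
      hE2 (j, k) (fun h => hkk' (congrArg Prod.snd h))
    have hv1 : cf k (j, k') = 1 := by simp [hcf, hkk'.symm]
    have hv2 : cf k' (j, k) = 1 := by simp [hcf, hkk']
    rw [hv1, one_mul] at h1
    rw [hv2, one_mul] at h2
    exact lt_asymm h1 h2
  -- independence of A and the race events
  have hindA : ∀ (E : Set ((Fin N × Fin K) → ℝ)), MeasurableSet E →
      μ (Svec ⁻¹' E ∩ Aset) = μ (Svec ⁻¹' E) * μ Aset := by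
    intro E hE
    have h := hAS.measure_inter_preimage_eq_mul (s := {a}) (t := E)
      (measurableSet_singleton a) hE
    calc μ (Svec ⁻¹' E ∩ Aset) = μ (Aset ∩ Svec ⁻¹' E) := by rw [Set.inter_comm]
      _ = μ Aset * μ (Svec ⁻¹' E) := h
      _ = μ (Svec ⁻¹' E) * μ Aset := mul_comm _ _
  -- measure of race ∩ Cset
  have hEC : ∀ k, μ (Svec ⁻¹' Efun k ∩ Cset)
      = ENNReal.ofReal ((1 + ∑ m, cf k m)⁻¹) * μ Aset := by
    intro k
    have hsubset : Svec ⁻¹' Efun k ∩ Cset ⊆ Svec ⁻¹' Efun k ∩ Aset :=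
      Set.inter_subset_inter_right _ hCA
    have heq : μ (Svec ⁻¹' Efun k ∩ Aset) = μ (Svec ⁻¹' Efun k ∩ Cset) := by
      refine le_antisymm ?_ (measure_mono hsubset)
      refine measure_le_of_ae_imp ?_
      filter_upwards [hYin k] with ω hω hmem
      exact ⟨hmem.1, ⟨hω hmem, hmem.2⟩⟩
    rw [← heq, hindA (Efun k) (hEmeas k), hrace k]
  -- exact value of the q-only race sum
  have hsum' : ∀ k : Fin K, ∑ m, cf' k m = (K:ℝ)/q a j - 1 := by
    intro k
    have hcj : ∀ k', k' ≠ k → cf' k (j, k') = 1 := fun k' hk' => by simp [hcf', hk']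
    have hrow : ∀ i, i ≠ j → ∀ k', cf' k (i, k')
        = if k' = k then q a i / q a j else q a i / q a j := by
      intro i hij k'
      by_cases h : k' = k <;> simp [hcf', hij, h]
    rw [CLML.prod_sum_eval hK j k (cf' k) _ _ (hc0' k) hcj hrow]
    have h1 : ∀ i ∈ Finset.univ.erase j,
        q a i / q a j + ((K:ℝ) - 1) * (q a i / q a j) = (K:ℝ) * (q a i / q a j) :=
      fun i _ => by ring
    rw [Finset.sum_congr rfl h1, ← Finset.mul_sum, ← Finset.sum_div,
      CLML.erase_sum_eq j _ (hqsum a)]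
    have hqj := hq a j
    field_simp
    ring
  have hval' : ∀ k : Fin K, ENNReal.ofReal ((1 + ∑ m, cf' k m)⁻¹)
      = ENNReal.ofReal (q a j / K) := by
    intro k
    rw [hsum' k]
    congr 1
    have h : 1 + ((K:ℝ)/q a j - 1) = (K:ℝ)/q a j := by ring
    rw [h, inv_div]
  -- upper bound on the main race sum
  have hsumUB : ∀ k : Fin K, ∑ m, cf k m ≤ (K:ℝ)/q a j + 1/(p (z k) j) - 2 := by
    intro k
    have hcj : ∀ k', k' ≠ k → cf k (j, k') = 1 := fun k' hk' => by simp [hcf, hk']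
    have hrow : ∀ i, i ≠ j → ∀ k', cf k (i, k')
        = if k' = k then max (q a i / q a j) (p (z k) i / p (z k) j)
          else q a i / q a j := by
      intro i hij k'
      by_cases h : k' = k <;> simp [hcf, hij, h]
    rw [CLML.prod_sum_eval hK j k (cf k) _ _ (hc0 k) hcj hrow]
    have hterm : ∀ i ∈ Finset.univ.erase j,
        max (q a i / q a j) (p (z k) i / p (z k) j) + ((K:ℝ) - 1) * (q a i / q a j)
        ≤ (K:ℝ) * (q a i / q a j) + p (z k) i / p (z k) j := by
      intro i _
      have h1 : max (q a i / q a j) (p (z k) i / p (z k) j)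
          ≤ q a i / q a j + p (z k) i / p (z k) j :=
        max_le (le_add_of_nonneg_right (div_nonneg (hp (z k) i).le (hp (z k) j).le))
          (le_add_of_nonneg_left (div_nonneg (hq a i).le (hq a j).le))
      linarith
    have h3 := Finset.sum_le_sum hterm
    have h2 : ∑ i ∈ Finset.univ.erase j, ((K:ℝ) * (q a i / q a j) + p (z k) i / p (z k) j)
        = (K:ℝ) * ((1 - q a j)/q a j) + (1 - p (z k) j)/(p (z k) j) := by
      rw [Finset.sum_add_distrib, ← Finset.mul_sum, ← Finset.sum_div, ← Finset.sum_div,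
        CLML.erase_sum_eq j _ (hqsum a), CLML.erase_sum_eq j _ (hpsum (z k))]
    rw [h2] at h3
    have hqj := hq a j
    have hpj := hp (z k) j
    have e1 : (K:ℝ) * ((1 - q a j)/q a j) = (K:ℝ)/q a j - K := by
      field_simp
    have e2 : (1 - p (z k) j)/(p (z k) j) = 1/(p (z k) j) - 1 := by
      field_simp
    rw [e1, e2] at h3
    linarith
  -- key per-term inequality
  have hkey : ∀ k : Fin K, ENNReal.ofReal (q a j * ((K:ℝ) + q a j / p (z k) j)⁻¹)
      ≤ ENNReal.ofReal ((1 + ∑ m, cf k m)⁻¹) := by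
    intro k
    exact ENNReal.ofReal_le_ofReal (CLML.real_key hK (hq a j) (hp (z k) j)
      (Finset.sum_nonneg fun m _ => hcnn k m) (hsumUB k))
  -- bound on μ Cset
  have hCbound : μ Cset ≤ ENNReal.ofReal (q a j) * μ Aset := by
    have h1 : μ Cset ≤ μ (⋃ k, (Svec ⁻¹' Efun' k ∩ Aset)) := measure_le_of_ae_imp hCin
    have h2 : μ (⋃ k, (Svec ⁻¹' Efun' k ∩ Aset)) ≤ ∑ k, μ (Svec ⁻¹' Efun' k ∩ Aset) :=
      measure_iUnion_fintype_le _ _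
    have h3 : ∀ k : Fin K, μ (Svec ⁻¹' Efun' k ∩ Aset)
        = ENNReal.ofReal (q a j / K) * μ Aset := by
      intro k
      rw [hindA (Efun' k) (hEmeas' k), hrace' k, hval' k]
    have h4 : ∑ k : Fin K, μ (Svec ⁻¹' Efun' k ∩ Aset)
        = ENNReal.ofReal (q a j) * μ Aset := by
      rw [Finset.sum_congr rfl (fun k _ => h3 k), Finset.sum_const, Finset.card_univ,
        Fintype.card_fin, nsmul_eq_mul, ← mul_assoc]
      congr 1
      rw [← ENNReal.ofReal_natCast K, ← ENNReal.ofReal_mul (by positivity)]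
      congr 1
      have hKne : (K:ℝ) ≠ 0 := Nat.cast_ne_zero.mpr hK.ne'
      field_simp
    calc μ Cset ≤ ∑ k : Fin K, μ (Svec ⁻¹' Efun' k ∩ Aset) := le_trans h1 h2
      _ = ENNReal.ofReal (q a j) * μ Aset := h4
  -- Markov property
  have hM : ∀ k : Fin K, μ (Svec ⁻¹' Efun k ∩ B) * μ Cset
      = μ (Svec ⁻¹' Efun k ∩ Cset) * μ B := fun k => hMarkov j a z (Efun k) (hEmeas k)
  -- union lower bound
  have hUnion : ∑ k, μ (Svec ⁻¹' Efun k ∩ B) ≤ μ ({ω | ∃ k : Fin K, X k ω = Y ω} ∩ B) := by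
    rw [← tsum_fintype (L := SummationFilter.unconditional _), ← measure_iUnion hdisj (fun k => (hSvecMeas (hEmeas k)).inter hBM)]
    refine measure_le_of_ae_imp ?_
    have hall : ∀ᵐ ω ∂μ, ∀ k : Fin K,
        ω ∈ Svec ⁻¹' Efun k ∩ B → ω ∈ {ω | ∃ k', X k' ω = Y ω} := ae_all_iff.mpr hXin
    filter_upwards [hall] with ω hω hmem
    obtain ⟨k, hk⟩ := Set.mem_iUnion.1 hmem
    exact ⟨hω k hk, hk.2⟩
  -- main chain
  have main1 : ENNReal.ofReal (∑ k : Fin K, ((K : ℝ) + q a j / p (z k) j)⁻¹) * μ Cset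
      ≤ ∑ k, μ (Svec ⁻¹' Efun k ∩ Cset) := by
    have hofsum : ENNReal.ofReal (∑ k : Fin K, ((K : ℝ) + q a j / p (z k) j)⁻¹)
        = ∑ k : Fin K, ENNReal.ofReal (((K : ℝ) + q a j / p (z k) j)⁻¹) :=
      ENNReal.ofReal_sum_of_nonneg (fun k _ => inv_nonneg.2 (add_nonneg (Nat.cast_nonneg K)
        (div_nonneg (hq a j).le (hp (z k) j).le)))
    calc ENNReal.ofReal (∑ k : Fin K, ((K : ℝ) + q a j / p (z k) j)⁻¹) * μ Cset
        ≤ ENNReal.ofReal (∑ k : Fin K, ((K : ℝ) + q a j / p (z k) j)⁻¹)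
            * (ENNReal.ofReal (q a j) * μ Aset) := mul_le_mul_right hCbound _
      _ = ∑ k : Fin K, ENNReal.ofReal (((K : ℝ) + q a j / p (z k) j)⁻¹)
            * (ENNReal.ofReal (q a j) * μ Aset) := by rw [hofsum, Finset.sum_mul]
      _ ≤ ∑ k, μ (Svec ⁻¹' Efun k ∩ Cset) := by
          refine Finset.sum_le_sum fun k _ => ?_
          rw [hEC k, ← mul_assoc, ← ENNReal.ofReal_mul (inv_nonneg.2 (add_nonneg
            (Nat.cast_nonneg K) (div_nonneg (hq a j).le (hp (z k) j).le)))]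
          refine mul_le_mul_left ?_ _
          calc ENNReal.ofReal (((K : ℝ) + q a j / p (z k) j)⁻¹ * q a j)
              = ENNReal.ofReal (q a j * ((K : ℝ) + q a j / p (z k) j)⁻¹) := by
                rw [mul_comm]
            _ ≤ ENNReal.ofReal ((1 + ∑ m, cf k m)⁻¹) := hkey k
  have main2 : ENNReal.ofReal (∑ k : Fin K, ((K : ℝ) + q a j / p (z k) j)⁻¹) * μ B * μ Cset
      ≤ μ ({ω | ∃ k : Fin K, X k ω = Y ω} ∩ B) * μ Cset := by
    calc ENNReal.ofReal (∑ k : Fin K, ((K : ℝ) + q a j / p (z k) j)⁻¹) * μ B * μ Cset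
        = (ENNReal.ofReal (∑ k : Fin K, ((K : ℝ) + q a j / p (z k) j)⁻¹) * μ Cset) * μ B := by
          ring
      _ ≤ (∑ k, μ (Svec ⁻¹' Efun k ∩ Cset)) * μ B := mul_le_mul_left main1 _
      _ = ∑ k, μ (Svec ⁻¹' Efun k ∩ Cset) * μ B := by rw [Finset.sum_mul]
      _ = ∑ k, μ (Svec ⁻¹' Efun k ∩ B) * μ Cset := by
          exact Finset.sum_congr rfl fun k _ => (hM k).symm
      _ = (∑ k, μ (Svec ⁻¹' Efun k ∩ B)) * μ Cset := by rw [Finset.sum_mul]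
      _ ≤ μ ({ω | ∃ k : Fin K, X k ω = Y ω} ∩ B) * μ Cset := mul_le_mul_left hUnion _
  have main3 : ENNReal.ofReal (∑ k : Fin K, ((K : ℝ) + q a j / p (z k) j)⁻¹) * μ B
      ≤ μ ({ω | ∃ k : Fin K, X k ω = Y ω} ∩ B) :=
    (ENNReal.mul_le_mul_iff_left hCne hCtop).mp main2
  rw [ProbabilityTheory.cond_apply hBM]
  calc ENNReal.ofReal (∑ k : Fin K, ((K : ℝ) + q a j / p (z k) j)⁻¹)
      = ENNReal.ofReal (∑ k : Fin K, ((K : ℝ) + q a j / p (z k) j)⁻¹) * μ B * (μ B)⁻¹ := by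
        rw [mul_assoc, ENNReal.mul_inv_cancel hB hBtop, mul_one]
    _ ≤ μ ({ω | ∃ k : Fin K, X k ω = Y ω} ∩ B) * (μ B)⁻¹ := mul_le_mul_left main3 _
    _ = (μ B)⁻¹ * μ (B ∩ {ω | ∃ k : Fin K, X k ω = Y ω}) := by
        rw [mul_comm, Set.inter_comm]
end
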